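/- For n ≥ 1 and j ≥ 1, the coefficient of z^n in Q(z)^j equals binom(n-1,3; n-j) - binom(n-1,3; n-j-2), where Q is the power series satisfying Q = z + zQ + zQ² and binom(m,3; k) denotes [z^k](1+z+z²)^m. -/

import Mathlib

open PowerSeries

/-- Trinomial coefficient binom(m,3;k) = [z^k](1+z+z²)^m, extended by 0 for k < 0. -/
noncomputable def trinomial (m : ℕ) (k : ℤ) : ℚ :=
  if 0 ≤ k then
    Polynomial.coeff ((1 + Polynomial.X + Polynomial.X ^ 2 : Polynomial ℚ) ^ m) k.toNat
  else 0

lemma trin_neg (m : ℕ) (k : ℤ) (h : k < 0) : trinomial m k = 0 := by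
  unfold trinomial; rw [if_neg (by omega)]

lemma trin_zero (k : ℤ) : trinomial 0 k = if k = 0 then 1 else 0 := by
  unfold trinomial
  split_ifs with h1 h2 h2
  · simp [h2]
  · rw [pow_zero, Polynomial.coeff_one, if_neg (by omega)]
  · omega
  · rfl

lemma trin_rec (m : ℕ) (k : ℤ) :
    trinomial (m+1) k = trinomial m k + trinomial m (k-1) + trinomial m (k-2) := by
  have hp : (1 + Polynomial.X + Polynomial.X ^ 2 : Polynomial ℚ)^(m+1)
      = (1 + Polynomial.X + Polynomial.X ^ 2)^m
        + (1 + Polynomial.X + Polynomial.X ^ 2)^m * Polynomial.X^1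
        + (1 + Polynomial.X + Polynomial.X ^ 2)^m * Polynomial.X^2 := by ring
  by_cases h0 : 0 ≤ k
  · lift k to ℕ using h0
    rcases k with _ | _ | a
    · unfold trinomial
      rw [if_pos (by omega), if_pos (by omega), if_neg (by omega), if_neg (by omega), hp]
      simp [Polynomial.coeff_mul_X_pow']
    · unfold trinomial
      rw [if_pos (by omega), if_pos (by omega), if_pos (by omega), if_neg (by omega), hp]
      have e2 : (((1:ℕ):ℤ)-1).toNat = 0 := rfl
      rw [e2]
      simp [Polynomial.coeff_mul_X_pow']
    · unfold trinomial
      rw [if_pos (by omega), if_pos (by omega), if_pos (by omega), if_pos (by omega), hp]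
      have e2 : (((a+2:ℕ):ℤ)-1).toNat = a + 1 := by omega
      have e3 : (((a+2:ℕ):ℤ)-2).toNat = a := by omega
      rw [e2, e3]
      simp only [Polynomial.coeff_add, Int.toNat_natCast, Polynomial.coeff_mul_X_pow']
      have e4 : a + 1 + 1 - 2 = a := rfl
      rw [if_pos (by omega), if_pos (by omega), e4]
      norm_num
  · rw [trin_neg _ _ (by omega), trin_neg _ _ (by omega), trin_neg _ _ (by omega),
      trin_neg _ _ (by omega)]
    ring

lemma trin_symm (m : ℕ) (k : ℤ) : trinomial m k = trinomial m (2*m - k) := by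
  induction m generalizing k with
  | zero =>
    rw [trin_zero, trin_zero]
    split_ifs with h1 h2 h2
    · rfl
    · omega
    · omega
    · rfl
  | succ m ih =>
    rw [trin_rec, trin_rec, ih k, ih (k-1), ih (k-2)]
    have e1 : 2*(m:ℤ) - k = 2*((m:ℕ)+1:ℕ) - k - 2 := by push_cast; ring
    have e2 : 2*(m:ℤ) - (k-1) = 2*((m:ℕ)+1:ℕ) - k - 1 := by push_cast; ring
    have e3 : 2*(m:ℤ) - (k-2) = 2*((m:ℕ)+1:ℕ) - k := by push_cast; ring
    rw [e1, e2, e3]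
    ring

lemma trin_key (m : ℕ) (k : ℤ) : trinomial (m+1) k - trinomial (m+1) (k-2)
    = (trinomial m k - trinomial m (k-2)) + (trinomial m (k-1) - trinomial m (k-3))
      + (trinomial m (k-2) - trinomial m (k-4)) := by
  rw [trin_rec, trin_rec, show k - 2 - 1 = k - 3 from by ring, show k - 2 - 2 = k - 4 from by ring]
  ring

lemma trin_key1 (m : ℕ) : trinomial (m+1) ((m:ℤ)+1) - trinomial (m+1) ((m:ℤ)-1)
    = (trinomial m ((m:ℤ)) - trinomial m ((m:ℤ)-2))
      + (trinomial m ((m:ℤ)-1) - trinomial m ((m:ℤ)-3)) := by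
  have hs : trinomial m ((m:ℤ)+1) = trinomial m ((m:ℤ)-1) := by
    rw [trin_symm m ((m:ℤ)+1)]
    congr 1
    push_cast
    ring
  rw [trin_rec, trin_rec, show (m:ℤ) + 1 - 1 = (m:ℤ) from by ring,
    show (m:ℤ) + 1 - 2 = (m:ℤ) - 1 from by ring,
    show (m:ℤ) - 1 - 1 = (m:ℤ) - 2 from by ring,
    show (m:ℤ) - 1 - 2 = (m:ℤ) - 3 from by ring, hs]
  ring

lemma aux_main (Q : PowerSeries ℚ)
    (hQ0 : constantCoeff Q = 0)
    (hQ : Q = X + X * Q + X * Q ^ 2) :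
    ∀ m : ℕ, ∀ j : ℕ, 1 ≤ j → (coeff (m+1)) (Q ^ j)
      = trinomial m ((m:ℤ)+1-j) - trinomial m ((m:ℤ)+1-j-2) := by
  have hc0 : ∀ l : ℕ, (coeff 0) (Q ^ (l+1)) = 0 := by
    intro l
    rw [coeff_zero_eq_constantCoeff, map_pow, hQ0, zero_pow (Nat.succ_ne_zero l)]
  have hsplit : ∀ i : ℕ, Q^(i+1) = X*Q^i + X*Q^(i+1) + X*Q^(i+2) := by
    intro i
    have h1 : Q^(i+1) = (X + X*Q + X*Q^2) * Q^i := by rw [← hQ]; ring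
    have h2 : (X + X*Q + X*Q^2) * Q^i = X*Q^i + X*Q^(i+1) + X*Q^(i+2) := by ring
    exact h1.trans h2
  have hrec : ∀ m i : ℕ, (coeff ((m+1)+1)) (Q^(i+1))
      = (coeff (m+1)) (Q^i) + (coeff (m+1)) (Q^(i+1)) + (coeff (m+1)) (Q^(i+2)) := by
    intro m i
    conv_lhs => rw [hsplit i]
    rw [map_add, map_add, coeff_succ_X_mul, coeff_succ_X_mul, coeff_succ_X_mul]
  intro m
  induction m with
  | zero =>
    rintro j hj
    obtain ⟨i, rfl⟩ : ∃ i, j = i + 1 := ⟨j - 1, by omega⟩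
    have h1 : (coeff (0+1)) (Q^(i+1))
        = (coeff 0) (Q^i) + (coeff 0) (Q^(i+1)) + (coeff 0) (Q^(i+2)) := by
      conv_lhs => rw [hsplit i]
      rw [map_add, map_add, coeff_succ_X_mul, coeff_succ_X_mul, coeff_succ_X_mul]
    norm_num at h1
    rw [h1, hQ0]
    cases i with
    | zero =>
      norm_num [trin_zero]
    | succ i' =>
      rw [trin_neg _ _ (by push_cast; omega), trin_neg _ _ (by push_cast; omega)]
      norm_num
  | succ m ih =>
    rintro j hj
    obtain ⟨i, rfl⟩ : ∃ i, j = i + 1 := ⟨j - 1, by omega⟩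
    rw [hrec m i]
    cases i with
    | zero =>
      rw [pow_zero, coeff_one, if_neg (Nat.succ_ne_zero m)]
      rw [ih 1 le_rfl, ih 2 (by norm_num)]
      have hk := trin_key1 m
      push_cast
      ring_nf
      ring_nf at hk
      linarith [hk]
    | succ i' =>
      rw [ih (i'+1) (by omega), ih (i'+2) (by omega), ih (i'+3) (by omega)]
      have hk := trin_key m ((m:ℤ) - i')
      push_cast
      ring_nf
      ring_nf at hk
      linarith [hk]

theorem coeff_Q_pow
    (Q : PowerSeries ℚ)
    (hQ0 : constantCoeff Q = 0)
    (hQ : Q = X + X * Q + X * Q ^ 2)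
    (n j : ℕ) (hn : 1 ≤ n) (hj : 1 ≤ j) :
    (coeff n) (Q ^ j)
      = trinomial (n - 1) ((n : ℤ) - j) - trinomial (n - 1) ((n : ℤ) - j - 2) := by
  obtain ⟨m, rfl⟩ : ∃ m, n = m + 1 := ⟨n - 1, by omega⟩
  have h := aux_main Q hQ0 hQ m j hj
  rw [show m + 1 - 1 = m from rfl]
  rw [h]
  push_cast
  ring_nf
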